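/- Let A be an n×n invertible symmetric real matrix, J a p×p symmetric real matrix with J·J = I_p, and ρ > 0. For any n×p real matrix X with XᵀAX = J, set S_X := A − A X J Xᵀ A and Π_X := I_n − X (XᵀX)⁻¹ Xᵀ. Then the matrix G¹_X := ρ⁻¹·A X Xᵀ A + S_X·S_X is invertible with inverse (G¹_X)⁻¹ = ρ·X Xᵀ + A⁻¹ Π_X A⁻¹; that is, (ρ⁻¹·A X Xᵀ A + S_X·S_X)·(ρ·X Xᵀ + A⁻¹ Π_X A⁻¹) = I_n. -/

import Mathlib

open Matrix

/-- For `X` on the indefinite Stiefel manifold, `G¹_X = ρ⁻¹·AXXᵀA + S_X²` is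
invertible with inverse `ρ·XXᵀ + A⁻¹Pi_XA⁻¹`. -/
theorem G1_inverse
    (n p : ℕ) (hpn : p ≤ n)
    (A : Matrix (Fin n) (Fin n) ℝ) (hA : Aᵀ = A) (hAinv : IsUnit A)
    (J : Matrix (Fin p) (Fin p) ℝ) (hJ : Jᵀ = J) (hJ2 : J * J = 1)
    (ρ : ℝ) (hρ : 0 < ρ)
    (X : Matrix (Fin n) (Fin p) ℝ) (hX : Xᵀ * A * X = J)
    (S : Matrix (Fin n) (Fin n) ℝ) (hS : S = A - A * X * J * Xᵀ * A)
    (Pi : Matrix (Fin n) (Fin n) ℝ) (hPi : Pi = 1 - X * (Xᵀ * X)⁻¹ * Xᵀ) :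
    IsUnit (ρ⁻¹ • (A * X * Xᵀ * A) + S * S) ∧
      (ρ⁻¹ • (A * X * Xᵀ * A) + S * S)⁻¹ = ρ • (X * Xᵀ) + A⁻¹ * Pi * A⁻¹ ∧
      (ρ⁻¹ • (A * X * Xᵀ * A) + S * S) * (ρ • (X * Xᵀ) + A⁻¹ * Pi * A⁻¹) = 1 := by
  -- A * A⁻¹ = 1
  have hAA : A * A⁻¹ = 1 :=
    Matrix.mul_nonsing_inv A ((Matrix.isUnit_iff_isUnit_det A).mp hAinv)
  -- XᵀX is invertible
  have hXtX : IsUnit (Xᵀ * X).det := by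
    by_contra h
    have hdet : (Xᵀ * X).det = 0 := by rwa [isUnit_iff_ne_zero, not_ne_iff] at h
    obtain ⟨v, hv0, hv⟩ := (Matrix.exists_mulVec_eq_zero_iff).mpr hdet
    have hXv : X.mulVec v = 0 := by
      have h1 : X.mulVec v ⬝ᵥ X.mulVec v = 0 := by
        have h2 : v ⬝ᵥ (Xᵀ * X).mulVec v = 0 := by rw [hv, dotProduct_zero]
        rwa [← Matrix.mulVec_mulVec, Matrix.dotProduct_mulVec,
          Matrix.vecMul_transpose] at h2
      exact (dotProduct_self_eq_zero).mp h1
    have hJv : J.mulVec v = 0 := by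
      rw [← hX, ← Matrix.mulVec_mulVec, ← Matrix.mulVec_mulVec, hXv,
        Matrix.mulVec_zero, Matrix.mulVec_zero]
    have hveq : v = 0 := by
      have h3 := congrArg (fun M => M.mulVec v) hJ2
      simp only [Matrix.one_mulVec, ← Matrix.mulVec_mulVec, hJv,
        Matrix.mulVec_zero] at h3
      exact h3.symm
    exact hv0 hveq
  have hXX1 : (Xᵀ * X) * (Xᵀ * X)⁻¹ = 1 := Matrix.mul_nonsing_inv _ hXtX
  -- S * X = 0
  have hSX : S * X = 0 := by
    rw [hS, show (A - A * X * J * Xᵀ * A) * X = A * X - A * X * (J * (Xᵀ * A * X)) by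
        simp only [Matrix.sub_mul, Matrix.mul_assoc], hX, hJ2, Matrix.mul_one, sub_self]
  -- Xᵀ * Pi = 0
  have hXtPi : Xᵀ * Pi = 0 := by
    rw [hPi, show Xᵀ * (1 - X * (Xᵀ * X)⁻¹ * Xᵀ) = Xᵀ - (Xᵀ * X) * (Xᵀ * X)⁻¹ * Xᵀ by
        simp only [Matrix.mul_sub, Matrix.mul_one, Matrix.mul_assoc],
      hXX1, Matrix.one_mul, sub_self]
  -- S * A⁻¹ = 1 - A X J Xᵀ
  have hSAinv : S * A⁻¹ = 1 - A * X * J * Xᵀ := by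
    rw [hS, show (A - A * X * J * Xᵀ * A) * A⁻¹
        = A * A⁻¹ - A * X * J * (Xᵀ * (A * A⁻¹)) by
        simp only [Matrix.sub_mul, Matrix.mul_assoc], hAA, Matrix.mul_one]
  -- the four terms
  have t1 : A * X * Xᵀ * A * (X * Xᵀ) = A * X * J * Xᵀ := by
    rw [show A * X * Xᵀ * A * (X * Xᵀ) = A * X * (Xᵀ * A * X * Xᵀ) by
        simp only [Matrix.mul_assoc], hX, ← Matrix.mul_assoc]
  have t2 : A * X * Xᵀ * A * (A⁻¹ * Pi * A⁻¹) = 0 := by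
    rw [show A * X * Xᵀ * A * (A⁻¹ * Pi * A⁻¹)
        = A * X * (Xᵀ * ((A * A⁻¹) * (Pi * A⁻¹))) by simp only [Matrix.mul_assoc],
      hAA, Matrix.one_mul, show Xᵀ * (Pi * A⁻¹) = Xᵀ * Pi * A⁻¹ by
        simp only [Matrix.mul_assoc], hXtPi, Matrix.zero_mul, Matrix.mul_zero]
  have t3 : S * S * (X * Xᵀ) = 0 := by
    rw [show S * S * (X * Xᵀ) = S * (S * X) * Xᵀ by simp only [Matrix.mul_assoc],
      hSX, Matrix.mul_zero, Matrix.zero_mul]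
  have hSPi : S * Pi = S := by
    rw [hPi, show S * (1 - X * (Xᵀ * X)⁻¹ * Xᵀ) = S - (S * X) * ((Xᵀ * X)⁻¹ * Xᵀ) by
        simp only [Matrix.mul_sub, Matrix.mul_one, Matrix.mul_assoc],
      hSX, Matrix.zero_mul, sub_zero]
  have t4 : S * S * (A⁻¹ * Pi * A⁻¹) = 1 - A * X * J * Xᵀ := by
    have h1 : (1 - A * X * J * Xᵀ) * Pi = Pi := by
      rw [show (1 - A * X * J * Xᵀ) * Pi = Pi - A * X * (J * (Xᵀ * Pi)) by
          simp only [Matrix.sub_mul, Matrix.one_mul, Matrix.mul_assoc],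
        hXtPi, Matrix.mul_zero, Matrix.mul_zero, sub_zero]
    calc S * S * (A⁻¹ * Pi * A⁻¹) = S * ((S * A⁻¹) * Pi) * A⁻¹ := by
          simp only [Matrix.mul_assoc]
      _ = S * Pi * A⁻¹ := by rw [hSAinv, h1]
      _ = S * A⁻¹ := by rw [hSPi]
      _ = 1 - A * X * J * Xᵀ := hSAinv
  -- the main product identity
  have hρρ : ρ⁻¹ * ρ = 1 := inv_mul_cancel₀ hρ.ne'
  have hρρ' : ρ * ρ⁻¹ = 1 := mul_inv_cancel₀ hρ.ne'
  have hProd : (ρ⁻¹ • (A * X * Xᵀ * A) + S * S) * (ρ • (X * Xᵀ) + A⁻¹ * Pi * A⁻¹) = 1 := by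
    rw [add_mul, mul_add, mul_add]
    simp only [smul_mul_assoc, mul_smul_comm, smul_smul, t1, t2, t3, t4, hρρ, hρρ',
      one_smul, smul_zero, add_zero, zero_add]
    abel
  exact ⟨(Matrix.isUnit_iff_isUnit_det _).mpr (Matrix.isUnit_det_of_right_inverse hProd),
    Matrix.inv_eq_right_inv hProd, hProd⟩
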